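/- Let C be a 3×n matrix of rank at most 3 over a field and let m_{ijk} denote its maximal minor on columns i, j, k. Then the determinant of any 4×4 matrix M with entries M_{rc} = m_{a+r-1, a+r, b+c-1} (indices modulo n, r, c ∈ {1,2,3,4}) vanishes. -/

import Mathlib

/-- The maximal minor of a `3 × n` matrix on columns `i`, `j`, `k`
(columns indexed modulo `n`). -/
def minor3 {F : Type*} [Field F] {n : ℕ} (C : Matrix (Fin 3) (ZMod n) F)
    (i j k : ZMod n) : F :=
  (Matrix.of fun r (x : Fin 3) => C r (![i, j, k] x)).det

/-- Cofactor expansion of `minor3` along the last column: it is linear in the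
column `C · k`. -/
lemma minor3_expand {F : Type*} [Field F] {n : ℕ} (C : Matrix (Fin 3) (ZMod n) F)
    (i j k : ZMod n) :
    minor3 C i j k = ∑ p : Fin 3, ((-1 : F) ^ ((p : ℕ) + 2) *
      (((Matrix.of fun r (x : Fin 3) => C r (![i, j, k] x)).submatrix
        p.succAbove (Fin.succAbove 2)).det)) * C p k := by
  rw [minor3, Matrix.det_succ_column _ 2]
  refine Finset.sum_congr rfl fun p _ => ?_
  have : (2 : Fin 3) = (⟨2, by decide⟩ : Fin 3) := rfl
  simp [Matrix.of_apply]
  ring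

theorem minor_frieze_diamond_det {F : Type*} [Field F] {n : ℕ} [NeZero n]
    (C : Matrix (Fin 3) (ZMod n) F) (hrank : C.rank ≤ 3) (a b : ZMod n) :
    Matrix.det (Matrix.of fun r c : Fin 4 =>
      minor3 C (a + (r : ℕ)) (a + (r : ℕ) + 1) (b + (c : ℕ))) = 0 := by
  set A : Matrix (Fin 4) (Fin 3) F := fun r p =>
    (-1 : F) ^ ((p : ℕ) + 2) *
      (((Matrix.of fun q (x : Fin 3) =>
        C q (![a + (r : ℕ), a + (r : ℕ) + 1, b] x)).submatrix
        p.succAbove (Fin.succAbove 2)).det) with hA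
  set B : Matrix (Fin 3) (Fin 4) F := fun p c => C p (b + (c : ℕ)) with hB
  have hM : (Matrix.of fun r c : Fin 4 =>
      minor3 C (a + (r : ℕ)) (a + (r : ℕ) + 1) (b + (c : ℕ))) = A * B := by
    ext r c
    rw [Matrix.of_apply, minor3_expand, Matrix.mul_apply]
    refine Finset.sum_congr rfl fun p _ => ?_
    have : ((Matrix.of fun q (x : Fin 3) =>
        C q (![a + (r : ℕ), a + (r : ℕ) + 1, b + (c : ℕ)] x)).submatrix
        p.succAbove (Fin.succAbove 2)) = ((Matrix.of fun q (x : Fin 3) =>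
        C q (![a + (r : ℕ), a + (r : ℕ) + 1, b] x)).submatrix
        p.succAbove (Fin.succAbove 2)) := by
      ext q x
      fin_cases x <;> simp [Fin.succAbove]
    rw [this]
  rw [hM]
  by_contra h
  have hu : IsUnit (A * B) := (Matrix.isUnit_iff_isUnit_det _).mpr (isUnit_iff_ne_zero.mpr h)
  have hr : (A * B).rank = Fintype.card (Fin 4) := Matrix.rank_of_isUnit _ hu
  have hle : (A * B).rank ≤ 3 := le_trans (Matrix.rank_mul_le_left A B)
    (le_trans (Matrix.rank_le_card_width A) (by simp))
  simp [hr] at hle
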